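/- Let e' be a positive continuous linear functional on B_V (V ≥ 1, measurable) and let π be the probability measure defined by π(A) = e'(1_A). Then π and e' coincide on all bounded measurable functions, π(V) ≤ e'(V) < ∞, and hence f ↦ π(f) defines an element of B_V'. -/

import Mathlib

open MeasureTheory Set

/-- The space `B_V` of functions dominated by a multiple of the weight `V`, as a submodule of
`X → ℝ`. -/
def BV {X : Type*} (V : X → ℝ) : Submodule ℝ (X → ℝ) where
  carrier := {f | ∃ C : ℝ, ∀ x, |f x| ≤ C * V x}
  zero_mem' := ⟨0, by intro x; simp⟩
  add_mem' := by
    rintro f g ⟨C, hC⟩ ⟨D, hD⟩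
    refine ⟨C + D, fun x => ?_⟩
    calc |f x + g x| ≤ |f x| + |g x| := abs_add_le _ _
      _ ≤ C * V x + D * V x := add_le_add (hC x) (hD x)
      _ = (C + D) * V x := by ring
  smul_mem' := by
    rintro c f ⟨C, hC⟩
    refine ⟨|c| * C, fun x => ?_⟩
    calc |(c • f) x| = |c| * |f x| := by simp [abs_mul]
      _ ≤ |c| * (C * V x) := by
          exact mul_le_mul_of_nonneg_left (hC x) (abs_nonneg c)
      _ = |c| * C * V x := by ring

/-- The indicator function `1_A` as an element of `B_V` (for `V ≥ 1`). -/
noncomputable def BV.ind {X : Type*} (V : X → ℝ) (hV : ∀ x, 1 ≤ V x) (A : Set X) : BV V :=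
  ⟨A.indicator 1, ⟨1, fun x => by
    by_cases h : x ∈ A <;>
      simp [Set.indicator_apply, h, le_trans zero_le_one (hV x), (hV x)]⟩⟩

/-- The weight `V` itself as an element of `B_V`. -/
def BV.wt {X : Type*} (V : X → ℝ) (hV : ∀ x, 1 ≤ V x) : BV V :=
  ⟨V, ⟨1, fun x => by rw [one_mul]; exact le_of_eq (abs_of_pos (lt_of_lt_of_le one_pos (hV x)))⟩⟩

/-- let `e'` be a positive linear functional on `B_V` and `π` the probability
measure `π(A) = e'(1_A)`. Then `π` and `e'` coincide on bounded measurable functions,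
`π(V) ≤ e'(V) < ∞`, and `f ↦ π(f)` is a `V`-bounded (hence continuous) functional on `B_V`. -/
theorem stmt7 {X : Type*} [MeasurableSpace X] (V : X → ℝ) (hVm : Measurable V)
    (hV : ∀ x, 1 ≤ V x) (e' : BV V →ₗ[ℝ] ℝ)
    (hpos : ∀ f : BV V, (∀ x, 0 ≤ (f : X → ℝ) x) → 0 ≤ e' f)
    (π : Measure X) [IsProbabilityMeasure π]
    (hπ : ∀ A : Set X, MeasurableSet A → π A = ENNReal.ofReal (e' (BV.ind V hV A))) :
    (∀ f : BV V, Measurable (f : X → ℝ) → (∃ C : ℝ, ∀ x, |(f : X → ℝ) x| ≤ C) →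
        ∫ x, (f : X → ℝ) x ∂π = e' f) ∧
      (∫⁻ x, ENNReal.ofReal (V x) ∂π) ≤ ENNReal.ofReal (e' (BV.wt V hV)) ∧
      (∀ f : BV V, Measurable (f : X → ℝ) → (∀ x, |(f : X → ℝ) x| ≤ V x) →
        |∫ x, (f : X → ℝ) x ∂π| ≤ e' (BV.wt V hV)) := by
  classical
  -- positivity and monotonicity of e'
  have hmono : ∀ f g : BV V, (∀ x, (f : X → ℝ) x ≤ (g : X → ℝ) x) → e' f ≤ e' g := by
    intro f g h
    have h2 : 0 ≤ e' (g - f) := by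
      refine hpos _ fun x => ?_
      have := h x
      simp only [Submodule.coe_sub, Pi.sub_apply]
      linarith
    rw [map_sub] at h2
    linarith
  have hEwt : 0 ≤ e' (BV.wt V hV) := hpos _ fun x => le_trans zero_le_one (hV x)
  have hind_nonneg : ∀ A : Set X, 0 ≤ e' (BV.ind V hV A) := by
    intro A
    refine hpos _ fun x => ?_
    by_cases h : x ∈ A <;> simp [BV.ind, Set.indicator_apply, h]
  have hπ' : ∀ A : Set X, MeasurableSet A → (π A).toReal = e' (BV.ind V hV A) := by
    intro A hA
    rw [hπ A hA, ENNReal.toReal_ofReal (hind_nonneg A)]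
  -- the key uniform-approximation statement
  have key : ∀ f : BV V, Measurable (f : X → ℝ) → ∀ C : ℝ, (∀ x, |(f : X → ℝ) x| ≤ C) →
      ∫ x, (f : X → ℝ) x ∂π = e' f := by
    intro f hf C hC
    have hfi : Integrable (f : X → ℝ) π := by
      refine (integrable_const C).mono' hf.aestronglyMeasurable (ae_of_all _ fun x => ?_)
      simpa [Real.norm_eq_abs] using hC x
    have hεbound : ∀ ε : ℝ, 0 < ε →
        |(∫ x, (f : X → ℝ) x ∂π) - e' f| ≤ ε * (1 + e' (BV.wt V hV)) := by
      intro ε hε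
      obtain ⟨N, hCN⟩ : ∃ N : ℕ, C / ε ≤ N := exists_nat_ge _
      set A : ℤ → Set X := fun k => {x | ⌊(f : X → ℝ) x / ε⌋ = k} with hAdef
      have hA : ∀ k, MeasurableSet (A k) :=
        fun k => (hf.div_const ε).floor (measurableSet_singleton k)
      set s : Finset ℤ := Finset.Icc (-(N : ℤ)) N with hs
      set g : BV V := ∑ k ∈ s, ((k : ℝ) * ε) • BV.ind V hV (A k) with hg
      have hk0mem : ∀ x, ⌊(f : X → ℝ) x / ε⌋ ∈ s := by
        intro x
        have h1 : |(f : X → ℝ) x / ε| ≤ C / ε := by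
          rw [abs_div, abs_of_pos hε]
          exact (div_le_div_iff_of_pos_right hε).mpr (hC x)
        rw [hs, Finset.mem_Icc]
        constructor
        · rw [Int.le_floor]
          push_cast
          linarith [(abs_le.mp h1).1, hCN]
        · have : ⌊(f : X → ℝ) x / ε⌋ ≤ ⌊(N : ℝ)⌋ :=
            Int.floor_le_floor (le_trans (abs_le.mp h1).2 hCN)
          simpa using this
      have hcoe : (g : X → ℝ)
          = fun x => ∑ k ∈ s, ((k : ℝ) * ε) * (A k).indicator (1 : X → ℝ) x := by
        rw [hg, Submodule.coe_sum]
        funext x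
        simp [BV.ind, Finset.sum_apply]
      -- pointwise value of g
      have hgval : ∀ x, (g : X → ℝ) x = (⌊(f : X → ℝ) x / ε⌋ : ℝ) * ε := by
        intro x
        rw [congrFun hcoe x]
        rw [Finset.sum_eq_single_of_mem ⌊(f : X → ℝ) x / ε⌋ (hk0mem x)]
        · have hx : x ∈ A ⌊(f : X → ℝ) x / ε⌋ := rfl
          simp [Set.indicator_of_mem hx]
        · intro k hk hne
          have hx : x ∉ A k := fun h => hne (h ▸ rfl)
          simp [Set.indicator_of_notMem hx]
      -- |f - g| ≤ ε
      have hfg : ∀ x, |(f : X → ℝ) x - (g : X → ℝ) x| ≤ ε := by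
        intro x
        rw [hgval x]
        set y := (f : X → ℝ) x
        have h1 : (⌊y / ε⌋ : ℝ) * ε ≤ y := by
          have := Int.floor_le (y / ε)
          calc (⌊y / ε⌋ : ℝ) * ε ≤ (y / ε) * ε := by nlinarith
            _ = y := by field_simp
        have h2 : y < ((⌊y / ε⌋ : ℝ) + 1) * ε := by
          have := Int.lt_floor_add_one (y / ε)
          calc y = (y / ε) * ε := by field_simp
            _ < ((⌊y / ε⌋ : ℝ) + 1) * ε := by nlinarith
        rw [abs_le]
        constructor <;> nlinarith
      -- g is measurable and integrable
      have hgmeas : Measurable (g : X → ℝ) := by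
        rw [hcoe]
        refine Finset.measurable_sum _ fun k _ => ?_
        exact (measurable_one.indicator (hA k)).const_mul _
      have hgi : Integrable (g : X → ℝ) π := by
        refine (integrable_const (C + ε)).mono' hgmeas.aestronglyMeasurable
          (ae_of_all _ fun x => ?_)
        have h1 := hfg x
        have h2 := hC x
        rw [Real.norm_eq_abs]
        calc |(g : X → ℝ) x| ≤ |(f : X → ℝ) x| + |(f : X → ℝ) x - (g : X → ℝ) x| := by
              have := abs_sub_abs_le_abs_sub ((g : X → ℝ) x) ((f : X → ℝ) x)
              have := abs_sub_comm ((f : X → ℝ) x) ((g : X → ℝ) x)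
              calc |(g : X → ℝ) x| = |(f : X → ℝ) x + ((g : X → ℝ) x - (f : X → ℝ) x)| := by
                    ring_nf
                _ ≤ |(f : X → ℝ) x| + |(g : X → ℝ) x - (f : X → ℝ) x| := abs_add_le _ _
                _ = |(f : X → ℝ) x| + |(f : X → ℝ) x - (g : X → ℝ) x| := by
                    rw [abs_sub_comm]
          _ ≤ C + ε := add_le_add h2 h1
      -- ∫ g = e' g
      have hint_g : ∫ x, (g : X → ℝ) x ∂π = e' g := by
        simp only [hcoe]
        rw [integral_finset_sum _ fun k _ =>
          ((show Integrable ((A k).indicator (1 : X → ℝ)) π from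
            (integrable_const (1 : ℝ)).indicator (hA k)).const_mul _)]
        rw [hg, _root_.map_sum]
        refine Finset.sum_congr rfl fun k _ => ?_
        rw [LinearMap.map_smul]
        have : ∫ x, ((k : ℝ) * ε) * (A k).indicator (1 : X → ℝ) x ∂π
            = ((k : ℝ) * ε) * ∫ x, (A k).indicator (1 : X → ℝ) x ∂π := by
          rw [integral_const_mul]
        rw [this, integral_indicator_one (hA k), measureReal_def, hπ' (A k) (hA k)]
        rfl
      -- |∫ f - ∫ g| ≤ ε
      have hint_close : |(∫ x, (f : X → ℝ) x ∂π) - ∫ x, (g : X → ℝ) x ∂π| ≤ ε := by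
        rw [← integral_sub hfi hgi]
        calc |∫ x, ((f : X → ℝ) x - (g : X → ℝ) x) ∂π|
            ≤ ∫ x, |(f : X → ℝ) x - (g : X → ℝ) x| ∂π := by
              simpa [Real.norm_eq_abs] using
                norm_integral_le_integral_norm (μ := π)
                  (f := fun x => (f : X → ℝ) x - (g : X → ℝ) x)
          _ ≤ ∫ _x, ε ∂π := integral_mono (hfi.sub hgi).abs (integrable_const ε) hfg
          _ = ε := by simp
      -- |e' f - e' g| ≤ ε * e' wt
      have he_close : |e' f - e' g| ≤ ε * e' (BV.wt V hV) := by
        rw [← map_sub]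
        have hup : e' (f - g) ≤ ε * e' (BV.wt V hV) := by
          have := hmono (f - g) (ε • BV.wt V hV) fun x => by
            have h1 := (abs_le.mp (hfg x)).2
            have h2 : ε ≤ ε * V x := le_mul_of_one_le_right hε.le (hV x)
            simp only [Submodule.coe_sub, Pi.sub_apply, SetLike.val_smul, Pi.smul_apply,
              smul_eq_mul]
            show (f : X → ℝ) x - (g : X → ℝ) x ≤ ε * V x
            linarith
          rwa [LinearMap.map_smul, smul_eq_mul] at this
        have hlo : -(ε * e' (BV.wt V hV)) ≤ e' (f - g) := by
          have := hmono ((-ε) • BV.wt V hV) (f - g) fun x => by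
            have h1 := (abs_le.mp (hfg x)).1
            have h2 : ε ≤ ε * V x := le_mul_of_one_le_right hε.le (hV x)
            simp only [Submodule.coe_sub, Pi.sub_apply, SetLike.val_smul, Pi.smul_apply,
              smul_eq_mul]
            show (-ε) * V x ≤ (f : X → ℝ) x - (g : X → ℝ) x
            linarith
          rw [LinearMap.map_smul, smul_eq_mul] at this
          linarith
        exact abs_le.mpr ⟨hlo, hup⟩
      calc |(∫ x, (f : X → ℝ) x ∂π) - e' f|
          ≤ |(∫ x, (f : X → ℝ) x ∂π) - ∫ x, (g : X → ℝ) x ∂π| + |(∫ x, (g : X → ℝ) x ∂π) - e' f| :=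
            abs_sub_le _ _ _
        _ = |(∫ x, (f : X → ℝ) x ∂π) - ∫ x, (g : X → ℝ) x ∂π| + |e' f - e' g| := by
            rw [hint_g, abs_sub_comm (e' g) (e' f)]
        _ ≤ ε + ε * e' (BV.wt V hV) := add_le_add hint_close he_close
        _ = ε * (1 + e' (BV.wt V hV)) := by ring
    -- conclude: the difference is zero
    have hzero : |(∫ x, (f : X → ℝ) x ∂π) - e' f| = 0 := by
      by_contra h
      have hpos' : 0 < |(∫ x, (f : X → ℝ) x ∂π) - e' f| :=
        lt_of_le_of_ne (abs_nonneg _) (Ne.symm h)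
      set d := |(∫ x, (f : X → ℝ) x ∂π) - e' f|
      have hden : (0 : ℝ) < 1 + e' (BV.wt V hV) := by linarith
      have := hεbound (d / (2 * (1 + e' (BV.wt V hV)))) (by positivity)
      have heq : d / (2 * (1 + e' (BV.wt V hV))) * (1 + e' (BV.wt V hV)) = d / 2 := by
        field_simp
      rw [heq] at this
      linarith
    have := abs_eq_zero.mp hzero
    linarith [sub_eq_zero.mp this]
  -- second conjunct
  have hlin2 : (∫⁻ x, ENNReal.ofReal (V x) ∂π) ≤ ENNReal.ofReal (e' (BV.wt V hV)) := by
    have hFmem : ∀ n : ℕ, (fun x => min (V x) (n : ℝ)) ∈ BV V := by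
      intro n
      refine ⟨1, fun x => ?_⟩
      have h0 : (0 : ℝ) ≤ min (V x) n :=
        le_min (le_trans zero_le_one (hV x)) (Nat.cast_nonneg n)
      rw [abs_of_nonneg h0, one_mul]
      exact min_le_left _ _
    set F : ℕ → BV V := fun n => ⟨fun x => min (V x) (n : ℝ), hFmem n⟩ with hF
    have hFmeas : ∀ n, Measurable ((F n : BV V) : X → ℝ) := fun n => hVm.min measurable_const
    have hFint : ∀ n : ℕ, ∫ x, ((F n : BV V) : X → ℝ) x ∂π = e' (F n) := by
      intro n
      refine key (F n) (hFmeas n) n fun x => ?_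
      have h0 : (0 : ℝ) ≤ min (V x) n :=
        le_min (le_trans zero_le_one (hV x)) (Nat.cast_nonneg n)
      show |min (V x) (n : ℝ)| ≤ (n : ℝ)
      rw [abs_of_nonneg h0]
      exact min_le_right _ _
    have hFle : ∀ n : ℕ, e' (F n) ≤ e' (BV.wt V hV) := by
      intro n
      exact hmono _ _ fun x => min_le_left _ _
    have hswap : (∫⁻ x, ENNReal.ofReal (V x) ∂π)
        = ⨆ n : ℕ, ∫⁻ x, ENNReal.ofReal (min (V x) n) ∂π := by
      rw [← lintegral_iSup (fun n => (hVm.min measurable_const).ennreal_ofReal)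
        (fun m n hmn x => ENNReal.ofReal_le_ofReal
          (le_min (min_le_left _ _) (le_trans (min_le_right _ _) (Nat.cast_le.mpr hmn))))]
      refine lintegral_congr fun x => ?_
      refine le_antisymm ?_ (iSup_le fun n => ENNReal.ofReal_le_ofReal (min_le_left _ _))
      obtain ⟨n, hn⟩ := exists_nat_ge (V x)
      exact le_iSup_of_le n (by rw [min_eq_left hn])
    rw [hswap]
    refine iSup_le fun n => ?_
    have hintn : Integrable (fun x => min (V x) n) π := by
      refine (integrable_const (n : ℝ)).mono' (hFmeas n).aestronglyMeasurable
        (ae_of_all _ fun x => ?_)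
      have h0 : (0 : ℝ) ≤ min (V x) n :=
        le_min (le_trans zero_le_one (hV x)) (Nat.cast_nonneg n)
      rw [Real.norm_eq_abs, abs_of_nonneg h0]
      exact min_le_right _ _
    have : (∫⁻ x, ENNReal.ofReal (min (V x) n) ∂π)
        = ENNReal.ofReal (∫ x, min (V x) n ∂π) :=
      (ofReal_integral_eq_lintegral_ofReal hintn
        (ae_of_all _ fun x =>
          le_min (le_trans zero_le_one (hV x)) (Nat.cast_nonneg n))).symm
    rw [this]
    refine ENNReal.ofReal_le_ofReal ?_
    calc ∫ x, min (V x) n ∂π = e' (F n) := hFint n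
      _ ≤ e' (BV.wt V hV) := hFle n
  refine ⟨fun f hf hb => key f hf hb.choose hb.choose_spec, hlin2, ?_⟩
  -- third conjunct
  intro f hf hbnd
  have hVint : Integrable V π := by
    constructor
    · exact hVm.aestronglyMeasurable
    · rw [HasFiniteIntegral]
      rw [lintegral_congr fun x =>
        Real.enorm_eq_ofReal (le_trans zero_le_one (hV x))]
      exact lt_of_le_of_lt hlin2 ENNReal.ofReal_lt_top
  have hfi : Integrable (f : X → ℝ) π := by
    refine hVint.mono' hf.aestronglyMeasurable (ae_of_all _ fun x => ?_)
    simpa [Real.norm_eq_abs] using hbnd x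
  calc |∫ x, (f : X → ℝ) x ∂π| ≤ ∫ x, |(f : X → ℝ) x| ∂π := by
        simpa [Real.norm_eq_abs] using norm_integral_le_integral_norm (μ := π) (f := ((f : BV V) : X → ℝ))
    _ ≤ ∫ x, V x ∂π := integral_mono hfi.abs hVint hbnd
    _ = (∫⁻ x, ENNReal.ofReal (V x) ∂π).toReal := by
        rw [integral_eq_lintegral_of_nonneg_ae
          (ae_of_all _ fun x => le_trans zero_le_one (hV x)) hVm.aestronglyMeasurable]
    _ ≤ (ENNReal.ofReal (e' (BV.wt V hV))).toReal :=
        ENNReal.toReal_mono ENNReal.ofReal_ne_top hlin2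
    _ = e' (BV.wt V hV) := ENNReal.toReal_ofReal hEwt
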